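/- Let E be a finite type, P sub-stochastic with spectral radius < 1, κ(x) = 1 − ∑_y P(x,y), μ a probability vector, and Q(x,y) = P(x,y) + κ(x)μ(y) the resurrected stochastic matrix. If ν is any probability vector with νQ = ν, then ν is proportional to μ(I−P)⁻¹, i.e. ν(y) = (μR)(y)/(μR𝟙) for all y, where R = (I−P)⁻¹. -/

import Mathlib

open Matrix Finset
attribute [local instance] Matrix.linftyOpNormedRing Matrix.linftyOpNormedAlgebra

/-- **Uniqueness of the invariant distribution of the μ-resurrected chain.** If `ν` is a
probability vector with `νQ = ν` for `Q x y = P x y + κ x * μ y`, then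
`ν(y) = (μR)(y)/(μR𝟙)` for all `y`, where `R = (I−P)⁻¹`. -/
theorem resurrected_invariant_unique
    {E : Type*} [Fintype E] [DecidableEq E] [Nonempty E]
    (P : Matrix E E ℝ)
    (hP_nonneg : ∀ x y, 0 ≤ P x y) (hP_sub : ∀ x, ∑ y, P x y ≤ 1)
    (hP_spec : spectralRadius ℂ (P.map Complex.ofReal) < 1)
    (κ : E → ℝ) (hκ : ∀ x, κ x = 1 - ∑ y, P x y)
    (μ : E → ℝ) (hμ_nonneg : ∀ x, 0 ≤ μ x) (hμ_sum : ∑ x, μ x = 1)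
    (R : Matrix E E ℝ) (hR : R = (1 - P)⁻¹)
    (Q : Matrix E E ℝ) (hQ : ∀ x y, Q x y = P x y + κ x * μ y)
    (ν : E → ℝ) (hν_nonneg : ∀ x, 0 ≤ ν x) (hν_sum : ∑ x, ν x = 1)
    (hν_inv : ∀ y, ∑ x, ν x * Q x y = ν y) :
    ∀ y, ν y = (∑ z, μ z * R z y) / (∑ w, ∑ z, μ z * R z w) := by
  -- 1 - P is invertible
  have hunitC : IsUnit (1 - P.map Complex.ofReal) := by
    have h1 : (1 : ℂ) ∈ resolventSet ℂ (P.map Complex.ofReal) := by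
      apply spectrum.mem_resolventSet_of_spectralRadius_lt
      simpa using hP_spec
    simpa [spectrum.mem_resolventSet_iff] using h1
  have hdet : IsUnit (1 - P).det := by
    have := (Matrix.isUnit_iff_isUnit_det _).mp hunitC
    have hmap : (1 - P).map (algebraMap ℝ ℂ) = 1 - P.map Complex.ofReal := by
      ext i j; simp [Matrix.map_apply, Matrix.one_apply, Matrix.sub_apply]
      split <;> simp
    rw [← hmap] at this
    have h2 : (algebraMap ℝ ℂ) (1 - P).det = ((1 - P).map (algebraMap ℝ ℂ)).det := by
      rw [RingHom.map_det, RingHom.mapMatrix_apply]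
    rw [← h2] at this
    exact isUnit_of_map_unit (algebraMap ℝ ℂ) _ this
  have hmul : (1 - P) * R = 1 := by rw [hR]; exact Matrix.mul_nonsing_inv _ hdet
  set c : ℝ := ∑ x, ν x * κ x with hc
  -- ν ᵥ* (1 - P) = c • μ
  have hv : ν ᵥ* (1 - P) = c • μ := by
    funext y
    have h1 := hν_inv y
    simp only [hQ, mul_add] at h1
    rw [Finset.sum_add_distrib] at h1
    have : ∑ x, ν x * (κ x * μ y) = c * μ y := by
      rw [hc, Finset.sum_mul]; congr 1; ext x; ring
    rw [this] at h1
    simp only [vecMul, dotProduct, Matrix.sub_apply, Matrix.one_apply, mul_sub,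
      Finset.sum_sub_distrib, Pi.smul_apply, smul_eq_mul]
    have hone : ∑ x, ν x * (if x = y then (1:ℝ) else 0) = ν y := by
      simp [Finset.sum_ite_eq']
    rw [hone]
    linarith
  -- ν = c • (μ ᵥ* R)
  have hnu : ∀ y, ν y = c * ∑ z, μ z * R z y := by
    intro y
    have : ν ᵥ* ((1 - P) * R) = (c • μ) ᵥ* R := by
      rw [← Matrix.vecMul_vecMul, hv]
    rw [hmul, Matrix.vecMul_one] at this
    have := congrFun this y
    simpa [vecMul, dotProduct, Finset.mul_sum, mul_assoc] using this
  set S : ℝ := ∑ w, ∑ z, μ z * R z w with hS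
  have hcS : c * S = 1 := by
    rw [hS, Finset.mul_sum, ← hν_sum]
    exact Finset.sum_congr rfl fun w _ => (hnu w).symm
  have hS0 : S ≠ 0 := fun h => by simp [h] at hcS
  intro y
  rw [hnu y, eq_div_iff hS0]
  linear_combination (∑ z, μ z * R z y) * hcS
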